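/- For the three-web on the domain {(x¹,x²,y¹,y²) ∈ ℝ⁴ : x¹y² ≠ 1 and x¹y² ≠ −1} given by f¹ = x¹ + y¹ + (1/2)(x¹)²y², f² = x² + y² − (1/2)x¹(y²)², with Δ := 1 + x¹y², the isoclinicity invariants are p = −(Δ² − 2Δ + 2)/(2Δ³(2−Δ)²) and q = (Δ² − 2Δ + 2)/(2Δ²(2−Δ)³); since Δ² − 2Δ + 2 = 1 + (x¹y²)² > 0, at every point of the domain p ≠ 0, q ≠ 0 and p ≠ q, so this web is nonisoclinic and satisfies the necessary conditions for extendability to a nonisoclinic 4-web W(4,2,2). -/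

import Mathlib

noncomputable section

open Matrix

/-- Partial derivative of `g` with respect to the `j`-th coordinate at the point `x`. -/
def pd (j : Fin 2) (g : (Fin 2 → ℝ) → ℝ) (x : Fin 2 → ℝ) : ℝ :=
  deriv (fun t => g (Function.update x j t)) (x j)

variable (f : Fin 2 → (Fin 2 → ℝ) → (Fin 2 → ℝ) → ℝ)

/-- Jacobian matrix `f̄ = (∂fⁱ/∂xʲ)` with respect to the first group of variables. -/
def fbar (x y : Fin 2 → ℝ) : Matrix (Fin 2) (Fin 2) ℝ :=
  Matrix.of fun i j => pd j (fun x' => f i x' y) x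

/-- Jacobian matrix `f̃ = (∂fⁱ/∂yʲ)` with respect to the second group of variables. -/
def ftil (x y : Fin 2 → ℝ) : Matrix (Fin 2) (Fin 2) ℝ :=
  Matrix.of fun i j => pd j (fun y' => f i x y') y

/-- Mixed second partial derivative `∂²fⁱ/∂xˡ∂yᵐ`. -/
def d2 (i l m : Fin 2) (x y : Fin 2 → ℝ) : ℝ :=
  pd m (fun y' => pd l (fun x' => f i x' y') x) y

/-- Connection coefficients
`Γⁱⱼₖ = −∑_{l,m} (∂²fⁱ/∂xˡ∂yᵐ) ḡˡⱼ g̃ᵐₖ`, where `ḡ = f̄⁻¹`, `g̃ = f̃⁻¹`. -/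
def Gam (i j k : Fin 2) (x y : Fin 2 → ℝ) : ℝ :=
  - ∑ l : Fin 2, ∑ m : Fin 2,
      d2 f i l m x y * (fbar f x y)⁻¹ l j * (ftil f x y)⁻¹ m k

/-- Torsion covector `aⱼ = ∑ₖ (Γᵏⱼₖ − Γᵏₖⱼ)`. -/
def aCov (j : Fin 2) (x y : Fin 2 → ℝ) : ℝ :=
  ∑ k : Fin 2, (Gam f k j k x y - Gam f k k j x y)

/-- Covariant derivative `p_{ik} = ∑ₘ (∂aᵢ/∂xᵐ) ḡᵐₖ − ∑ⱼ aⱼ Γʲₖᵢ`. -/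
def pCov (i k : Fin 2) (x y : Fin 2 → ℝ) : ℝ :=
  (∑ m : Fin 2, pd m (fun x' => aCov f i x' y) x * (fbar f x y)⁻¹ m k)
    - ∑ j : Fin 2, aCov f j x y * Gam f j k i x y

/-- Covariant derivative `q_{ik} = ∑ₘ (∂aᵢ/∂yᵐ) g̃ᵐₖ − ∑ⱼ aⱼ Γʲᵢₖ`. -/
def qCov (i k : Fin 2) (x y : Fin 2 → ℝ) : ℝ :=
  (∑ m : Fin 2, pd m (fun y' => aCov f i x y') y * (ftil f x y)⁻¹ m k)
    - ∑ j : Fin 2, aCov f j x y * Gam f j i k x y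

/-- Isoclinicity invariant `p = (p₁₂ − p₂₁)/2`. -/
def pIso (x y : Fin 2 → ℝ) : ℝ := (pCov f 0 1 x y - pCov f 1 0 x y) / 2

/-- Isoclinicity invariant `q = (q₁₂ − q₂₁)/2`. -/
def qIso (x y : Fin 2 → ℝ) : ℝ := (qCov f 0 1 x y - qCov f 1 0 x y) / 2


/-- The web `f¹ = x¹ + y¹ + (1/2)(x¹)²y²`, `f² = x² + y² − (1/2)x¹(y²)²`.
(Indices: `x 0 ↦ x¹`, `x 1 ↦ x²`, `y 0 ↦ y¹`, `y 1 ↦ y²`.) -/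
noncomputable def webA : Fin 2 → (Fin 2 → ℝ) → (Fin 2 → ℝ) → ℝ :=
  ![fun x y => x 0 + y 0 + (1/2) * (x 0)^2 * y 1,
    fun x y => x 1 + y 1 - (1/2) * x 0 * (y 1)^2]


lemma deriv_quad (c0 c1 c2 : ℝ) (t : ℝ) :
    deriv (fun s : ℝ => c0 + c1 * s + c2 * s ^ 2) t = c1 + 2 * c2 * t := by
  have h : HasDerivAt (fun s : ℝ => c0 + c1 * s + c2 * s ^ 2) (c1 + 2 * c2 * t) t := by
    have h1 := ((hasDerivAt_id t).const_mul c1).const_add c0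
    have h2 := (hasDerivAt_pow 2 t).const_mul c2
    refine (h1.add h2).congr_deriv ?_
    ring
  exact h.deriv


lemma deriv_rat1 (c e t : ℝ) (h : 1 - (t*e)^2 ≠ 0) :
    deriv (fun s : ℝ => c / (1 - (s*e)^2)) t = 2*c*e^2*t/(1-(t*e)^2)^2 := by
  have hd : HasDerivAt (fun s : ℝ => 1 - (s*e)^2) (-(2*(t*e)*e)) t := by
    have := (((hasDerivAt_id t).mul_const e).pow 2).const_sub 1
    refine this.congr_deriv ?_; simp only [id_eq]; ring
  have h2 : HasDerivAt (fun s : ℝ => c / (1 - (s*e)^2))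
      ((0 * (1 - (t*e)^2) - c * (-(2*(t*e)*e))) / (1 - (t*e)^2)^2) t :=
    (hasDerivAt_const t c).div hd h
  rw [h2.deriv]; ring

lemma deriv_rat2 (e t : ℝ) (h : 1 - (t*e)^2 ≠ 0) :
    deriv (fun s : ℝ => s / (1 - (s*e)^2)) t = (1+(t*e)^2)/(1-(t*e)^2)^2 := by
  have hd : HasDerivAt (fun s : ℝ => 1 - (s*e)^2) (-(2*(t*e)*e)) t := by
    have := (((hasDerivAt_id t).mul_const e).pow 2).const_sub 1
    refine this.congr_deriv ?_; simp only [id_eq]; ring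
  have h2 : HasDerivAt (fun s : ℝ => s / (1 - (s*e)^2))
      ((1 * (1 - (t*e)^2) - t * (-(2*(t*e)*e))) / (1 - (t*e)^2)^2) t :=
    (hasDerivAt_id t).div hd h
  rw [h2.deriv]
  have : 1 * (1 - (t*e)^2) - t * (-(2*(t*e)*e)) = 1 + (t*e)^2 := by ring
  rw [this]

-- partials in x
lemma P00 (x y : Fin 2 → ℝ) : pd 0 (fun x' => webA 0 x' y) x = 1 + x 0 * y 1 := by
  unfold pd
  rw [show (fun t => webA 0 (Function.update x 0 t) y)
      = fun s : ℝ => y 0 + 1 * s + (1/2 * y 1) * s ^ 2 from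
    funext fun t => by simp [webA, Function.update]; try ring, deriv_quad]
  ring

lemma P01 (x y : Fin 2 → ℝ) : pd 1 (fun x' => webA 0 x' y) x = 0 := by
  unfold pd
  rw [show (fun t => webA 0 (Function.update x 1 t) y)
      = fun s : ℝ => (x 0 + y 0 + 1/2 * (x 0)^2 * y 1) + 0 * s + 0 * s ^ 2 from
    funext fun t => by simp [webA, Function.update]; try ring, deriv_quad]
  ring

lemma P10 (x y : Fin 2 → ℝ) : pd 0 (fun x' => webA 1 x' y) x = -(1/2) * (y 1)^2 := by
  unfold pd
  rw [show (fun t => webA 1 (Function.update x 0 t) y)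
      = fun s : ℝ => (x 1 + y 1) + (-(1/2) * (y 1)^2) * s + 0 * s ^ 2 from
    funext fun t => by simp [webA, Function.update]; try ring, deriv_quad]
  ring

lemma P11 (x y : Fin 2 → ℝ) : pd 1 (fun x' => webA 1 x' y) x = 1 := by
  unfold pd
  rw [show (fun t => webA 1 (Function.update x 1 t) y)
      = fun s : ℝ => (y 1 - 1/2 * x 0 * (y 1)^2) + 1 * s + 0 * s ^ 2 from
    funext fun t => by simp [webA, Function.update]; try ring, deriv_quad]
  ring

-- partials in y
lemma Q00 (x y : Fin 2 → ℝ) : pd 0 (fun y' => webA 0 x y') y = 1 := by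
  unfold pd
  rw [show (fun t => webA 0 x (Function.update y 0 t))
      = fun s : ℝ => (x 0 + 1/2 * (x 0)^2 * y 1) + 1 * s + 0 * s ^ 2 from
    funext fun t => by simp [webA, Function.update]; try ring, deriv_quad]
  ring

lemma Q01 (x y : Fin 2 → ℝ) : pd 1 (fun y' => webA 0 x y') y = 1/2 * (x 0)^2 := by
  unfold pd
  rw [show (fun t => webA 0 x (Function.update y 1 t))
      = fun s : ℝ => (x 0 + y 0) + (1/2 * (x 0)^2) * s + 0 * s ^ 2 from
    funext fun t => by simp [webA, Function.update]; try ring, deriv_quad]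
  ring

lemma Q10 (x y : Fin 2 → ℝ) : pd 0 (fun y' => webA 1 x y') y = 0 := by
  unfold pd
  rw [show (fun t => webA 1 x (Function.update y 0 t))
      = fun s : ℝ => (x 1 + y 1 - 1/2 * x 0 * (y 1)^2) + 0 * s + 0 * s ^ 2 from
    funext fun t => by simp [webA, Function.update]; try ring, deriv_quad]
  ring

lemma Q11 (x y : Fin 2 → ℝ) : pd 1 (fun y' => webA 1 x y') y = 1 - x 0 * y 1 := by
  unfold pd
  rw [show (fun t => webA 1 x (Function.update y 1 t))
      = fun s : ℝ => (x 1) + 1 * s + (-(1/2) * x 0) * s ^ 2 from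
    funext fun t => by simp [webA, Function.update]; try ring, deriv_quad]
  ring

lemma fbar_webA (x y : Fin 2 → ℝ) :
    fbar webA x y = !![1 + x 0 * y 1, 0; -(1/2) * (y 1)^2, 1] := by
  ext i j
  fin_cases i <;> fin_cases j <;>
    simp [fbar, P00, P01, P10, P11]

lemma ftil_webA (x y : Fin 2 → ℝ) :
    ftil webA x y = !![1, 1/2 * (x 0)^2; 0, 1 - x 0 * y 1] := by
  ext i j
  fin_cases i <;> fin_cases j <;>
    simp [ftil, Q00, Q01, Q10, Q11]

lemma pd_const (m : Fin 2) (c : ℝ) (z : Fin 2 → ℝ) : pd m (fun _ => c) z = 0 := by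
  simp [pd]

lemma d2_001 (x y : Fin 2 → ℝ) : d2 webA 0 0 1 x y = x 0 := by
  unfold d2
  rw [show (fun y' => pd 0 (fun x' => webA 0 x' y') x) = fun y' => 1 + x 0 * y' 1 from
    funext fun y' => P00 x y']
  unfold pd
  rw [show (fun t => 1 + x 0 * Function.update y 1 t 1)
      = fun s : ℝ => 1 + (x 0) * s + 0 * s ^ 2 from
    funext fun t => by simp [Function.update]; try ring, deriv_quad]
  ring

lemma d2_000 (x y : Fin 2 → ℝ) : d2 webA 0 0 0 x y = 0 := by
  unfold d2
  rw [show (fun y' => pd 0 (fun x' => webA 0 x' y') x) = fun y' => 1 + x 0 * y' 1 from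
    funext fun y' => P00 x y']
  unfold pd
  rw [show (fun t => 1 + x 0 * Function.update y 0 t 1)
      = fun s : ℝ => (1 + x 0 * y 1) + 0 * s + 0 * s ^ 2 from
    funext fun t => by simp [Function.update]; try ring, deriv_quad]
  ring

lemma d2_01m (x y : Fin 2 → ℝ) (m : Fin 2) : d2 webA 0 1 m x y = 0 := by
  unfold d2
  rw [show (fun y' => pd 1 (fun x' => webA 0 x' y') x) = fun _ => (0:ℝ) from
    funext fun y' => P01 x y']
  simp [pd]

lemma d2_101 (x y : Fin 2 → ℝ) : d2 webA 1 0 1 x y = -(y 1) := by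
  unfold d2
  rw [show (fun y' => pd 0 (fun x' => webA 1 x' y') x) = fun y' => -(1/2) * (y' 1)^2 from
    funext fun y' => P10 x y']
  unfold pd
  rw [show (fun t => -(1/2) * (Function.update y 1 t 1)^2)
      = fun s : ℝ => 0 + 0 * s + (-(1/2)) * s ^ 2 from
    funext fun t => by simp [Function.update]; try ring, deriv_quad]
  ring

lemma d2_100 (x y : Fin 2 → ℝ) : d2 webA 1 0 0 x y = 0 := by
  unfold d2
  rw [show (fun y' => pd 0 (fun x' => webA 1 x' y') x) = fun y' => -(1/2) * (y' 1)^2 from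
    funext fun y' => P10 x y']
  unfold pd
  rw [show (fun t => -(1/2) * (Function.update y 0 t 1)^2)
      = fun s : ℝ => (-(1/2) * (y 1)^2) + 0 * s + 0 * s ^ 2 from
    funext fun t => by simp [Function.update]; try ring, deriv_quad]
  ring

lemma d2_11m (x y : Fin 2 → ℝ) (m : Fin 2) : d2 webA 1 1 m x y = 0 := by
  unfold d2
  rw [show (fun y' => pd 1 (fun x' => webA 1 x' y') x) = fun _ => (1:ℝ) from
    funext fun y' => P11 x y']
  simp [pd]

lemma gbar_webA (x y : Fin 2 → ℝ) (hA : 1 + x 0 * y 1 ≠ 0) :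
    (fbar webA x y)⁻¹
      = !![1 / (1 + x 0 * y 1), 0;
           1/2 * (y 1)^2 / (1 + x 0 * y 1), 1] := by
  rw [fbar_webA]
  apply Matrix.inv_eq_right_inv
  ext i j
  fin_cases i <;> fin_cases j <;>
    simp [Matrix.mul_apply, Fin.sum_univ_two] <;>
    (try field_simp) <;> (try ring)

lemma gtil_webA (x y : Fin 2 → ℝ) (hB : 1 - x 0 * y 1 ≠ 0) :
    (ftil webA x y)⁻¹
      = !![1, -(1/2) * (x 0)^2 / (1 - x 0 * y 1);
           0, 1 / (1 - x 0 * y 1)] := by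
  rw [ftil_webA]
  apply Matrix.inv_eq_right_inv
  ext i j
  fin_cases i <;> fin_cases j <;>
    simp [Matrix.mul_apply, Fin.sum_univ_two] <;>
    (try field_simp) <;> (try ring)

lemma Gam_webA (x y : Fin 2 → ℝ) (hA : 1 + x 0 * y 1 ≠ 0) (hB : 1 - x 0 * y 1 ≠ 0)
    (i j k : Fin 2) :
    Gam webA i j k x y
      = ![-(x 0), y 1] i * ![1, 0] j * ![0, 1] k
          / ((1 + x 0 * y 1) * (1 - x 0 * y 1)) := by
  unfold Gam
  rw [gbar_webA x y hA, gtil_webA x y hB]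
  fin_cases i <;> fin_cases j <;> fin_cases k <;>
    simp [Fin.sum_univ_two, d2_000, d2_001, d2_01m, d2_100, d2_101, d2_11m] <;>
    field_simp

lemma aCov_webA (x y : Fin 2 → ℝ) (hA : 1 + x 0 * y 1 ≠ 0) (hB : 1 - x 0 * y 1 ≠ 0)
    (j : Fin 2) :
    aCov webA j x y = ![y 1, x 0] j / (1 - (x 0 * y 1)^2) := by
  have hD : 1 - (x 0 * y 1)^2 ≠ 0 := by
    have := mul_ne_zero hA hB
    intro h; apply this; nlinarith [h]
  unfold aCov
  rw [Fin.sum_univ_two, Gam_webA x y hA hB, Gam_webA x y hA hB,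
      Gam_webA x y hA hB, Gam_webA x y hA hB]
  fin_cases j <;> simp <;> field_simp <;> (try ring) <;>
    field_simp [show 1 - x 0 ^ 2 * y 1 ^ 2 ≠ 0 by rwa [mul_pow] at hD]

lemma mem_nhds_ne (c t0 : ℝ) (h1 : t0 * c ≠ 1) (h2 : t0 * c ≠ -1) :
    {t : ℝ | t * c ≠ 1 ∧ t * c ≠ -1} ∈ nhds t0 := by
  have hopen : IsOpen {t : ℝ | t * c ≠ 1 ∧ t * c ≠ -1} := by
    have he : {t : ℝ | t * c ≠ 1 ∧ t * c ≠ -1}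
        = (fun t => t * c) ⁻¹' (({1}ᶜ : Set ℝ) ∩ ({-1}ᶜ : Set ℝ)) := by
      ext t; simp [Set.mem_inter_iff, and_comm]
    rw [he]
    exact (isOpen_compl_singleton.inter isOpen_compl_singleton).preimage
      (continuous_id.mul continuous_const)
  exact hopen.mem_nhds ⟨h1, h2⟩

lemma pdax00 (x y : Fin 2 → ℝ) (h1 : x 0 * y 1 ≠ 1) (h2 : x 0 * y 1 ≠ -1) :
    pd 0 (fun x' => aCov webA 0 x' y) x
      = 2 * y 1 * (y 1)^2 * x 0 / (1 - (x 0 * y 1)^2)^2 := by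
  have hA : 1 + x 0 * y 1 ≠ 0 := fun h => h2 (by linarith)
  have hB : 1 - x 0 * y 1 ≠ 0 := fun h => h1 (by linarith)
  have hev : (fun t => aCov webA 0 (Function.update x 0 t) y)
      =ᶠ[nhds (x 0)] fun t => y 1 / (1 - (t * y 1)^2) := by
    filter_upwards [mem_nhds_ne (y 1) (x 0) h1 h2] with t ht
    have hA' : 1 + (Function.update x 0 t) 0 * y 1 ≠ 0 := by
      simp only [Function.update_self]
      exact fun h => ht.2 (by linarith)
    have hB' : 1 - (Function.update x 0 t) 0 * y 1 ≠ 0 := by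
      simp only [Function.update_self]
      exact fun h => ht.1 (by linarith)
    rw [aCov_webA _ y hA' hB' 0]
    simp [Function.update_self]
  unfold pd
  rw [hev.deriv_eq, deriv_rat1 (y 1) (y 1) (x 0) (by intro h; exact (mul_ne_zero hA hB) (by nlinarith))]

lemma pdax01 (x y : Fin 2 → ℝ) (h1 : x 0 * y 1 ≠ 1) (h2 : x 0 * y 1 ≠ -1) (i : Fin 2) :
    pd 1 (fun x' => aCov webA i x' y) x = 0 := by
  have hA : 1 + x 0 * y 1 ≠ 0 := fun h => h2 (by linarith)
  have hB : 1 - x 0 * y 1 ≠ 0 := fun h => h1 (by linarith)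
  have heq : (fun t => aCov webA i (Function.update x 1 t) y)
      = fun _ : ℝ => ![y 1, x 0] i / (1 - (x 0 * y 1)^2) := by
    funext t
    have h0 : (Function.update x 1 t) 0 = x 0 := by
      simp [Function.update_of_ne]
    have := aCov_webA (Function.update x 1 t) y (by rw [h0]; exact hA) (by rw [h0]; exact hB) i
    rw [this, h0]
  unfold pd
  rw [heq, deriv_const]

lemma pdax10 (x y : Fin 2 → ℝ) (h1 : x 0 * y 1 ≠ 1) (h2 : x 0 * y 1 ≠ -1) :
    pd 0 (fun x' => aCov webA 1 x' y) x
      = (1 + (x 0 * y 1)^2) / (1 - (x 0 * y 1)^2)^2 := by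
  have hA : 1 + x 0 * y 1 ≠ 0 := fun h => h2 (by linarith)
  have hB : 1 - x 0 * y 1 ≠ 0 := fun h => h1 (by linarith)
  have hev : (fun t => aCov webA 1 (Function.update x 0 t) y)
      =ᶠ[nhds (x 0)] fun t => t / (1 - (t * y 1)^2) := by
    filter_upwards [mem_nhds_ne (y 1) (x 0) h1 h2] with t ht
    have hA' : 1 + (Function.update x 0 t) 0 * y 1 ≠ 0 := by
      simp only [Function.update_self]
      exact fun h => ht.2 (by linarith)
    have hB' : 1 - (Function.update x 0 t) 0 * y 1 ≠ 0 := by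
      simp only [Function.update_self]
      exact fun h => ht.1 (by linarith)
    rw [aCov_webA _ y hA' hB' 1]
    simp [Function.update_self]
  unfold pd
  rw [hev.deriv_eq, deriv_rat2 (y 1) (x 0)
    (by intro h; exact (mul_ne_zero hA hB) (by nlinarith))]

lemma pday0 (x y : Fin 2 → ℝ) (h1 : x 0 * y 1 ≠ 1) (h2 : x 0 * y 1 ≠ -1) (i : Fin 2) :
    pd 0 (fun y' => aCov webA i x y') y = 0 := by
  have hA : 1 + x 0 * y 1 ≠ 0 := fun h => h2 (by linarith)
  have hB : 1 - x 0 * y 1 ≠ 0 := fun h => h1 (by linarith)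
  have heq : (fun t => aCov webA i x (Function.update y 0 t))
      = fun _ : ℝ => ![y 1, x 0] i / (1 - (x 0 * y 1)^2) := by
    funext t
    have h0 : (Function.update y 0 t) 1 = y 1 := by
      simp [Function.update_of_ne]
    have := aCov_webA x (Function.update y 0 t) (by rw [h0]; exact hA) (by rw [h0]; exact hB) i
    rw [this, h0]
  unfold pd
  rw [heq, deriv_const]

lemma pday01 (x y : Fin 2 → ℝ) (h1 : x 0 * y 1 ≠ 1) (h2 : x 0 * y 1 ≠ -1) :
    pd 1 (fun y' => aCov webA 0 x y') y
      = (1 + (x 0 * y 1)^2) / (1 - (x 0 * y 1)^2)^2 := by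
  have hA : 1 + x 0 * y 1 ≠ 0 := fun h => h2 (by linarith)
  have hB : 1 - x 0 * y 1 ≠ 0 := fun h => h1 (by linarith)
  have h1' : y 1 * x 0 ≠ 1 := by rw [mul_comm]; exact h1
  have h2' : y 1 * x 0 ≠ -1 := by rw [mul_comm]; exact h2
  have hev : (fun t => aCov webA 0 x (Function.update y 1 t))
      =ᶠ[nhds (y 1)] fun t => t / (1 - (t * x 0)^2) := by
    filter_upwards [mem_nhds_ne (x 0) (y 1) h1' h2'] with t ht
    have hA' : 1 + x 0 * (Function.update y 1 t) 1 ≠ 0 := by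
      simp only [Function.update_self]
      exact fun h => ht.2 (by linarith [mul_comm (x 0) t])
    have hB' : 1 - x 0 * (Function.update y 1 t) 1 ≠ 0 := by
      simp only [Function.update_self]
      exact fun h => ht.1 (by linarith [mul_comm (x 0) t])
    rw [aCov_webA x _ hA' hB' 0]
    simp [Function.update_self]
    ring_nf
  unfold pd
  rw [hev.deriv_eq, deriv_rat2 (x 0) (y 1)
    (by intro h; exact (mul_ne_zero hA hB) (by nlinarith))]
  ring_nf

lemma pday11 (x y : Fin 2 → ℝ) (h1 : x 0 * y 1 ≠ 1) (h2 : x 0 * y 1 ≠ -1) :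
    pd 1 (fun y' => aCov webA 1 x y') y
      = 2 * x 0 * (x 0)^2 * y 1 / (1 - (x 0 * y 1)^2)^2 := by
  have hA : 1 + x 0 * y 1 ≠ 0 := fun h => h2 (by linarith)
  have hB : 1 - x 0 * y 1 ≠ 0 := fun h => h1 (by linarith)
  have h1' : y 1 * x 0 ≠ 1 := by rw [mul_comm]; exact h1
  have h2' : y 1 * x 0 ≠ -1 := by rw [mul_comm]; exact h2
  have hev : (fun t => aCov webA 1 x (Function.update y 1 t))
      =ᶠ[nhds (y 1)] fun t => x 0 / (1 - (t * x 0)^2) := by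
    filter_upwards [mem_nhds_ne (x 0) (y 1) h1' h2'] with t ht
    have hA' : 1 + x 0 * (Function.update y 1 t) 1 ≠ 0 := by
      simp only [Function.update_self]
      exact fun h => ht.2 (by linarith [mul_comm (x 0) t])
    have hB' : 1 - x 0 * (Function.update y 1 t) 1 ≠ 0 := by
      simp only [Function.update_self]
      exact fun h => ht.1 (by linarith [mul_comm (x 0) t])
    rw [aCov_webA x _ hA' hB' 1]
    simp [Function.update_self]
    ring_nf
  unfold pd
  rw [hev.deriv_eq, deriv_rat1 (x 0) (x 0) (y 1)
    (by intro h; exact (mul_ne_zero hA hB) (by nlinarith))]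
  ring_nf

/-- For the web `webA` on the domain `x¹y² ≠ ±1`, with `Δ = 1 + x¹y²`, the
isoclinicity invariants are `p = −(Δ²−2Δ+2)/(2Δ³(2−Δ)²)` and
`q = (Δ²−2Δ+2)/(2Δ²(2−Δ)³)`, and at every point `p ≠ 0`, `q ≠ 0`, `p ≠ q`:
the web is nonisoclinic and satisfies the necessary conditions for
extendability to a nonisoclinic 4-web `W(4,2,2)`. -/
theorem webA_isoclinicity_invariants (x y : Fin 2 → ℝ)
    (h1 : x 0 * y 1 ≠ 1) (h2 : x 0 * y 1 ≠ -1)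
    (Δ : ℝ) (hΔ : Δ = 1 + x 0 * y 1) :
    pIso webA x y = -((Δ^2 - 2*Δ + 2) / (2 * Δ^3 * (2 - Δ)^2)) ∧
    qIso webA x y = (Δ^2 - 2*Δ + 2) / (2 * Δ^2 * (2 - Δ)^3) ∧
    pIso webA x y ≠ 0 ∧ qIso webA x y ≠ 0 ∧ pIso webA x y ≠ qIso webA x y := by
  have hA : 1 + x 0 * y 1 ≠ 0 := fun h => h2 (by linarith)
  have hB : 1 - x 0 * y 1 ≠ 0 := fun h => h1 (by linarith)
  have hD : 1 - (x 0 * y 1)^2 ≠ 0 := by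
    intro h; exact (mul_ne_zero hA hB) (by nlinarith)
  have hp01 : pCov webA 0 1 x y = 0 := by
    unfold pCov
    rw [Fin.sum_univ_two, Fin.sum_univ_two, gbar_webA x y hA,
        pdax00 x y h1 h2, pdax01 x y h1 h2 0,
        Gam_webA x y hA hB, Gam_webA x y hA hB,
        aCov_webA x y hA hB, aCov_webA x y hA hB]
    simp
  have hp10 : pCov webA 1 0 x y
      = (1 + (x 0 * y 1)^2) / ((1 - (x 0 * y 1)^2)^2 * (1 + x 0 * y 1)) := by
    unfold pCov
    rw [Fin.sum_univ_two, Fin.sum_univ_two, gbar_webA x y hA,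
        pdax10 x y h1 h2, pdax01 x y h1 h2 1,
        Gam_webA x y hA hB, Gam_webA x y hA hB,
        aCov_webA x y hA hB, aCov_webA x y hA hB]
    simp
    field_simp
    ring
  have hq01 : qCov webA 0 1 x y
      = (1 + (x 0 * y 1)^2) / ((1 - (x 0 * y 1)^2)^2 * (1 - x 0 * y 1)) := by
    unfold qCov
    rw [Fin.sum_univ_two, Fin.sum_univ_two, gtil_webA x y hB,
        pday0 x y h1 h2 0, pday01 x y h1 h2,
        Gam_webA x y hA hB, Gam_webA x y hA hB,
        aCov_webA x y hA hB, aCov_webA x y hA hB]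
    simp
    field_simp
    ring
  have hq10 : qCov webA 1 0 x y = 0 := by
    unfold qCov
    rw [Fin.sum_univ_two, Fin.sum_univ_two, gtil_webA x y hB,
        pday0 x y h1 h2 1, pday11 x y h1 h2,
        Gam_webA x y hA hB, Gam_webA x y hA hB,
        aCov_webA x y hA hB, aCov_webA x y hA hB]
    simp
  have hΔ0 : Δ ≠ 0 := by rw [hΔ]; exact hA
  have hΔ2 : 2 - Δ ≠ 0 := by rw [hΔ]; intro h; exact hB (by linarith)
  have hN : Δ^2 - 2*Δ + 2 ≠ 0 := by nlinarith [sq_nonneg (Δ - 1)]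
  have hd1 : 2 * Δ^3 * (2 - Δ)^2 ≠ 0 :=
    mul_ne_zero (mul_ne_zero two_ne_zero (pow_ne_zero 3 hΔ0)) (pow_ne_zero 2 hΔ2)
  have hd2 : 2 * Δ^2 * (2 - Δ)^3 ≠ 0 :=
    mul_ne_zero (mul_ne_zero two_ne_zero (pow_ne_zero 2 hΔ0)) (pow_ne_zero 3 hΔ2)
  have hL : (1 - (x 0 * y 1)^2)^2 * (1 + x 0 * y 1) * 2 ≠ 0 :=
    mul_ne_zero (mul_ne_zero (pow_ne_zero 2 hD) hA) two_ne_zero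
  have hL2 : (1 - (x 0 * y 1)^2)^2 * (1 - x 0 * y 1) * 2 ≠ 0 :=
    mul_ne_zero (mul_ne_zero (pow_ne_zero 2 hD) hB) two_ne_zero
  have hp : pIso webA x y
      = -((Δ^2 - 2*Δ + 2) / (2 * Δ^3 * (2 - Δ)^2)) := by
    unfold pIso
    rw [hp01, hp10, zero_sub, neg_div, neg_inj, div_div, div_eq_div_iff hL hd1, hΔ]
    ring
  have hq : qIso webA x y
      = (Δ^2 - 2*Δ + 2) / (2 * Δ^2 * (2 - Δ)^3) := by
    unfold qIso
    rw [hq01, hq10, sub_zero, div_div, div_eq_div_iff hL2 hd2, hΔ]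
    ring
  refine ⟨hp, hq, ?_, ?_, ?_⟩
  · rw [hp]
    exact neg_ne_zero.mpr (div_ne_zero hN hd1)
  · rw [hq]
    exact div_ne_zero hN hd2
  · rw [hp, hq]
    intro h
    rw [neg_div' ] at h
    rw [div_eq_div_iff hd1 hd2] at h
    have key : (Δ^2 - 2*Δ + 2) * (Δ^2 * (2 - Δ)^2) * 4 = 0 := by
      linear_combination -h
    have : (Δ^2 - 2*Δ + 2) * (Δ^2 * (2 - Δ)^2) * 4 ≠ 0 :=
      mul_ne_zero (mul_ne_zero hN
        (mul_ne_zero (pow_ne_zero 2 hΔ0) (pow_ne_zero 2 hΔ2))) (by norm_num)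
    exact this key

end
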